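/- For η ∈ ℝ, the brackets [X₀,X₁]=2X₁, [X₀,X₂]=−2X₂, [X₁,X₂]=X₀, [x⁰,x¹]=−(η/2)x¹, [x⁰,x²]=−(η/2)x², [x¹,x²]=0, [x⁰,X₀]=0, [x⁰,X₁]=x²+(η/2)X₁, [x⁰,X₂]=−x¹+(η/2)X₂, [x¹,X₀]=2x¹, [x¹,X₁]=−2x⁰−(η/2)X₀, [x¹,X₂]=0, [x²,X₀]=−2x², [x²,X₁]=0, [x²,X₂]=2x⁰−(η/2)X₀ define a Lie algebra structure D on the 6-dimensional real vector space with basis {X₀,X₁,X₂,x⁰,x¹,x²} (the classical double D(sl(2,ℝ)) for the standard deformation), and the linear map ψ : g_{η²} → D determined by ψ(J)=−(1/2)(X₁−X₂), ψ(K₁)=(1/2)(X₁+X₂), ψ(K₂)=−(1/2)X₀, ψ(P₀)=−(η/2)(X₁+X₂)+x¹−x², ψ(P₁)=2x⁰, ψ(P₂)=(η/2)(X₁−X₂)+x¹+x² is a Lie algebra isomorphism. -/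

import Mathlib

set_option maxHeartbeats 2000000 in
/-- For `η ∈ ℝ`, the listed brackets define a Lie algebra structure `D`
on the 6-dimensional space with basis `{X₀,X₁,X₂,x⁰,x¹,x²}` (the classical double
`D(sl(2,ℝ))` for the standard deformation), and the linear map `ψ : g_{η²} → D`
determined by the given formulas is a Lie algebra isomorphism. -/
theorem double_sl2_exists_and_iso
    (η : ℝ) (g : Type*) [LieRing g] [LieAlgebra ℝ g]
    (J P0 P1 P2 K1 K2 : g)
    (hind : LinearIndependent ℝ ![J, P0, P1, P2, K1, K2])
    (hspan : Submodule.span ℝ (Set.range ![J, P0, P1, P2, K1, K2]) = ⊤)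
    (hJP1 : ⁅J, P1⁆ = P2) (hJP2 : ⁅J, P2⁆ = -P1)
    (hJK1 : ⁅J, K1⁆ = K2) (hJK2 : ⁅J, K2⁆ = -K1) (hJP0 : ⁅J, P0⁆ = 0)
    (hP1K1 : ⁅P1, K1⁆ = -P0) (hP2K2 : ⁅P2, K2⁆ = -P0)
    (hP1K2 : ⁅P1, K2⁆ = 0) (hP2K1 : ⁅P2, K1⁆ = 0)
    (hP0K1 : ⁅P0, K1⁆ = -P1) (hP0K2 : ⁅P0, K2⁆ = -P2)
    (hK1K2 : ⁅K1, K2⁆ = -J)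
    (hP0P1 : ⁅P0, P1⁆ = (η ^ 2) • K1) (hP0P2 : ⁅P0, P2⁆ = (η ^ 2) • K2)
    (hP1P2 : ⁅P1, P2⁆ = -((η ^ 2) • J)) :
    let X0 : Fin 6 → ℝ := Pi.single 0 1
    let X1 : Fin 6 → ℝ := Pi.single 1 1
    let X2 : Fin 6 → ℝ := Pi.single 2 1
    let x0 : Fin 6 → ℝ := Pi.single 3 1
    let x1 : Fin 6 → ℝ := Pi.single 4 1
    let x2 : Fin 6 → ℝ := Pi.single 5 1
    ∃ br : (Fin 6 → ℝ) →ₗ[ℝ] (Fin 6 → ℝ) →ₗ[ℝ] (Fin 6 → ℝ),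
      -- the bracket is alternating and satisfies the Jacobi identity
      (∀ v, br v v = 0) ∧
      (∀ u v w, br (br u v) w + br (br v w) u + br (br w u) v = 0) ∧
      -- the defining structure constants
      br X0 X1 = (2 : ℝ) • X1 ∧ br X0 X2 = -((2 : ℝ) • X2) ∧ br X1 X2 = X0 ∧
      br x0 x1 = -((η / 2) • x1) ∧ br x0 x2 = -((η / 2) • x2) ∧ br x1 x2 = 0 ∧
      br x0 X0 = 0 ∧ br x0 X1 = x2 + (η / 2) • X1 ∧ br x0 X2 = -x1 + (η / 2) • X2 ∧
      br x1 X0 = (2 : ℝ) • x1 ∧ br x1 X1 = -((2 : ℝ) • x0) - (η / 2) • X0 ∧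
      br x1 X2 = 0 ∧
      br x2 X0 = -((2 : ℝ) • x2) ∧ br x2 X1 = 0 ∧
      br x2 X2 = (2 : ℝ) • x0 - (η / 2) • X0 ∧
      -- and ψ is a Lie algebra isomorphism from g_{η²} onto this Lie algebra
      ∃ ψ : g →ₗ[ℝ] (Fin 6 → ℝ),
        Function.Bijective ψ ∧
        (∀ u v : g, ψ ⁅u, v⁆ = br (ψ u) (ψ v)) ∧
        ψ J = -((1 / 2 : ℝ) • (X1 - X2)) ∧
        ψ K1 = (1 / 2 : ℝ) • (X1 + X2) ∧
        ψ K2 = -((1 / 2 : ℝ) • X0) ∧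
        ψ P0 = -((η / 2) • (X1 + X2)) + x1 - x2 ∧
        ψ P1 = (2 : ℝ) • x0 ∧
        ψ P2 = (η / 2) • (X1 - X2) + x1 + x2 := by
  intro X0 X1 X2 x0 x1 x2
  have hX0 : X0 = Pi.single 0 1 := rfl
  have hX1 : X1 = Pi.single 1 1 := rfl
  have hX2 : X2 = Pi.single 2 1 := rfl
  have hx0 : x0 = Pi.single 3 1 := rfl
  have hx1 : x1 = Pi.single 4 1 := rfl
  have hx2 : x2 = Pi.single 5 1 := rfl
  -- reversed brackets
  have hP1J : ⁅P1, J⁆ = -P2 := by rw [← lie_skew, hJP1]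
  have hP2J : ⁅P2, J⁆ = P1 := by rw [← lie_skew, hJP2, neg_neg]
  have hK1J : ⁅K1, J⁆ = -K2 := by rw [← lie_skew, hJK1]
  have hK2J : ⁅K2, J⁆ = K1 := by rw [← lie_skew, hJK2, neg_neg]
  have hP0J : ⁅P0, J⁆ = 0 := by rw [← lie_skew, hJP0, neg_zero]
  have hK1P1 : ⁅K1, P1⁆ = P0 := by rw [← lie_skew, hP1K1, neg_neg]
  have hK2P2 : ⁅K2, P2⁆ = P0 := by rw [← lie_skew, hP2K2, neg_neg]
  have hK2P1 : ⁅K2, P1⁆ = 0 := by rw [← lie_skew, hP1K2, neg_zero]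
  have hK1P2 : ⁅K1, P2⁆ = 0 := by rw [← lie_skew, hP2K1, neg_zero]
  have hK1P0 : ⁅K1, P0⁆ = P1 := by rw [← lie_skew, hP0K1, neg_neg]
  have hK2P0 : ⁅K2, P0⁆ = P2 := by rw [← lie_skew, hP0K2, neg_neg]
  have hK2K1 : ⁅K2, K1⁆ = J := by rw [← lie_skew, hK1K2, neg_neg]
  have hP1P0 : ⁅P1, P0⁆ = -((η ^ 2) • K1) := by rw [← lie_skew, hP0P1]
  have hP2P0 : ⁅P2, P0⁆ = -((η ^ 2) • K2) := by rw [← lie_skew, hP0P2]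
  have hP2P1 : ⁅P2, P1⁆ = (η ^ 2) • J := by rw [← lie_skew, hP1P2, neg_neg]
  -- the basis of g
  have hspan' : ⊤ ≤ Submodule.span ℝ (Set.range ![J, P0, P1, P2, K1, K2]) := hspan.ge
  set b : Module.Basis (Fin 6) ℝ g := Module.Basis.mk hind hspan' with hbdef
  have hb0 : b 0 = J := by rw [hbdef, Module.Basis.mk_apply]; rfl
  have hb1 : b 1 = P0 := by rw [hbdef, Module.Basis.mk_apply]; rfl
  have hb2 : b 2 = P1 := by rw [hbdef, Module.Basis.mk_apply]; rfl
  have hb3 : b 3 = P2 := by rw [hbdef, Module.Basis.mk_apply]; rfl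
  have hb4 : b 4 = K1 := by rw [hbdef, Module.Basis.mk_apply]; rfl
  have hb5 : b 5 = K2 := by rw [hbdef, Module.Basis.mk_apply]; rfl
  -- the map ψ
  set T : Fin 6 → (Fin 6 → ℝ) :=
    ![-((1 / 2 : ℝ) • (X1 - X2)),
      -((η / 2) • (X1 + X2)) + x1 - x2,
      (2 : ℝ) • x0,
      (η / 2) • (X1 - X2) + x1 + x2,
      (1 / 2 : ℝ) • (X1 + X2),
      -((1 / 2 : ℝ) • X0)] with hTdef
  have hT0 : T 0 = -((1 / 2 : ℝ) • (X1 - X2)) := rfl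
  have hT1 : T 1 = -((η / 2) • (X1 + X2)) + x1 - x2 := rfl
  have hT2 : T 2 = (2 : ℝ) • x0 := rfl
  have hT3 : T 3 = (η / 2) • (X1 - X2) + x1 + x2 := rfl
  have hT4 : T 4 = (1 / 2 : ℝ) • (X1 + X2) := rfl
  have hT5 : T 5 = -((1 / 2 : ℝ) • X0) := rfl
  set ψ : g →ₗ[ℝ] (Fin 6 → ℝ) := b.constr ℝ T with hψdef
  have hψb : ∀ i, ψ (b i) = T i := fun i => b.constr_basis ℝ T i
  have hψJ : ψ J = -((1 / 2 : ℝ) • (X1 - X2)) := by rw [← hb0, hψb, hT0]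
  have hψP0 : ψ P0 = -((η / 2) • (X1 + X2)) + x1 - x2 := by rw [← hb1, hψb, hT1]
  have hψP1 : ψ P1 = (2 : ℝ) • x0 := by rw [← hb2, hψb, hT2]
  have hψP2 : ψ P2 = (η / 2) • (X1 - X2) + x1 + x2 := by rw [← hb3, hψb, hT3]
  have hψK1 : ψ K1 = (1 / 2 : ℝ) • (X1 + X2) := by rw [← hb4, hψb, hT4]
  have hψK2 : ψ K2 = -((1 / 2 : ℝ) • X0) := by rw [← hb5, hψb, hT5]
  -- the inverse map φ
  set S : Fin 6 → g :=
    ![(-2 : ℝ) • K2, K1 - J, K1 + J, (1 / 2 : ℝ) • P1,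
      (1 / 2 : ℝ) • (P0 + η • K1 + P2 + η • J),
      (1 / 2 : ℝ) • (P2 + η • J - P0 - η • K1)] with hSdef
  have hS0 : S 0 = (-2 : ℝ) • K2 := rfl
  have hS1 : S 1 = K1 - J := rfl
  have hS2 : S 2 = K1 + J := rfl
  have hS3 : S 3 = (1 / 2 : ℝ) • P1 := rfl
  have hS4 : S 4 = (1 / 2 : ℝ) • (P0 + η • K1 + P2 + η • J) := rfl
  have hS5 : S 5 = (1 / 2 : ℝ) • (P2 + η • J - P0 - η • K1) := rfl
  set φ : (Fin 6 → ℝ) →ₗ[ℝ] g := (Pi.basisFun ℝ (Fin 6)).constr ℝ S with hφdef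
  have hφsingle : ∀ i : Fin 6, φ (Pi.single i 1) = S i := by
    intro i
    have h : (Pi.single i 1 : Fin 6 → ℝ) = Pi.basisFun ℝ (Fin 6) i := by
      simp [Pi.basisFun_apply]
    rw [h, hφdef, Module.Basis.constr_basis]
  -- ψ maps the S i to the standard basis vectors
  have hψS0 : ψ (S 0) = Pi.single 0 1 := by
    rw [hS0, map_smul, hψK2, hX0]
    funext k; fin_cases k <;> simp [Pi.single_apply] <;> try ring
  have hψS1 : ψ (S 1) = Pi.single 1 1 := by
    rw [hS1, map_sub, hψK1, hψJ, hX1, hX2]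
    funext k; fin_cases k <;> simp [Pi.single_apply] <;> try ring
  have hψS2 : ψ (S 2) = Pi.single 2 1 := by
    rw [hS2, map_add, hψK1, hψJ, hX1, hX2]
    funext k; fin_cases k <;> simp [Pi.single_apply] <;> try ring
  have hψS3 : ψ (S 3) = Pi.single 3 1 := by
    rw [hS3, map_smul, hψP1, hx0]
    funext k; fin_cases k <;> simp [Pi.single_apply] <;> try ring
  have hψS4 : ψ (S 4) = Pi.single 4 1 := by
    rw [hS4]
    simp only [map_smul, map_add, hψP0, hψK1, hψP2, hψJ, hX1, hX2, hx1, hx2]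
    funext k; fin_cases k <;> simp [Pi.single_apply] <;> try ring
  have hψS5 : ψ (S 5) = Pi.single 5 1 := by
    rw [hS5]
    simp only [map_smul, map_sub, map_add, hψP0, hψK1, hψP2, hψJ, hX1, hX2, hx1, hx2]
    funext k; fin_cases k <;> simp [Pi.single_apply] <;> try ring
  have hψS : ∀ i : Fin 6, ψ (S i) = Pi.single i 1 := by
    intro i
    fin_cases i
    exacts [hψS0, hψS1, hψS2, hψS3, hψS4, hψS5]
  -- φ sends the images of the generators back to the generators
  have hφT0 : φ (T 0) = J := by
    rw [hT0]
    simp only [hX0, hX1, hX2, hx0, hx1, hx2, map_neg, map_smul, map_sub, map_add,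
      hφsingle, hS0, hS1, hS2, hS3, hS4, hS5]
    module
  have hφT1 : φ (T 1) = P0 := by
    rw [hT1]
    simp only [hX0, hX1, hX2, hx0, hx1, hx2, map_neg, map_smul, map_sub, map_add,
      hφsingle, hS0, hS1, hS2, hS3, hS4, hS5]
    module
  have hφT2 : φ (T 2) = P1 := by
    rw [hT2]
    simp only [hX0, hX1, hX2, hx0, hx1, hx2, map_neg, map_smul, map_sub, map_add,
      hφsingle, hS0, hS1, hS2, hS3, hS4, hS5]
    module
  have hφT3 : φ (T 3) = P2 := by
    rw [hT3]
    simp only [hX0, hX1, hX2, hx0, hx1, hx2, map_neg, map_smul, map_sub, map_add,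
      hφsingle, hS0, hS1, hS2, hS3, hS4, hS5]
    module
  have hφT4 : φ (T 4) = K1 := by
    rw [hT4]
    simp only [hX0, hX1, hX2, hx0, hx1, hx2, map_neg, map_smul, map_sub, map_add,
      hφsingle, hS0, hS1, hS2, hS3, hS4, hS5]
    module
  have hφT5 : φ (T 5) = K2 := by
    rw [hT5]
    simp only [hX0, hX1, hX2, hx0, hx1, hx2, map_neg, map_smul, map_sub, map_add,
      hφsingle, hS0, hS1, hS2, hS3, hS4, hS5]
    module
  have hφψ : ∀ u : g, φ (ψ u) = u := by
    have h : φ.comp ψ = LinearMap.id := by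
      apply b.ext
      intro i
      rw [LinearMap.comp_apply, LinearMap.id_apply, hψb]
      fin_cases i
      exacts [hφT0.trans hb0.symm, hφT1.trans hb1.symm, hφT2.trans hb2.symm,
        hφT3.trans hb3.symm, hφT4.trans hb4.symm, hφT5.trans hb5.symm]
    intro u
    simpa using LinearMap.congr_fun h u
  have hψφ : ∀ v : Fin 6 → ℝ, ψ (φ v) = v := by
    have h : ψ.comp φ = LinearMap.id := by
      apply (Pi.basisFun ℝ (Fin 6)).ext
      intro i
      have hbf : Pi.basisFun ℝ (Fin 6) i = Pi.single i 1 := by simp [Pi.basisFun_apply]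
      rw [LinearMap.comp_apply, LinearMap.id_apply, hbf, hφsingle, hψS]
    intro v
    simpa using LinearMap.congr_fun h v
  have hbij : Function.Bijective ψ :=
    ⟨Function.LeftInverse.injective hφψ, Function.RightInverse.surjective hψφ⟩
  -- the bracket
  refine ⟨LinearMap.mk₂ ℝ (fun u v => ψ ⁅φ u, φ v⁆)
      (fun u₁ u₂ v => by
        show ψ ⁅φ (u₁ + u₂), φ v⁆ = ψ ⁅φ u₁, φ v⁆ + ψ ⁅φ u₂, φ v⁆
        rw [map_add, add_lie, map_add])
      (fun c u v => by
        show ψ ⁅φ (c • u), φ v⁆ = c • ψ ⁅φ u, φ v⁆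
        rw [map_smul, smul_lie, map_smul])
      (fun u v₁ v₂ => by
        show ψ ⁅φ u, φ (v₁ + v₂)⁆ = ψ ⁅φ u, φ v₁⁆ + ψ ⁅φ u, φ v₂⁆
        rw [map_add, lie_add, map_add])
      (fun c u v => by
        show ψ ⁅φ u, φ (c • v)⁆ = c • ψ ⁅φ u, φ v⁆
        rw [map_smul, lie_smul, map_smul]),
    ?_, ?_, ?_, ?_, ?_, ?_, ?_, ?_, ?_, ?_, ?_, ?_, ?_, ?_, ?_, ?_, ?_,
    ψ, hbij, ?_, hψJ, hψK1, hψK2, hψP0, hψP1, hψP2⟩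
  -- alternating
  · intro v
    show ψ ⁅φ v, φ v⁆ = 0
    rw [lie_self, map_zero]
  -- Jacobi
  · intro u v w
    show ψ ⁅φ (ψ ⁅φ u, φ v⁆), φ w⁆ + ψ ⁅φ (ψ ⁅φ v, φ w⁆), φ u⁆ +
      ψ ⁅φ (ψ ⁅φ w, φ u⁆), φ v⁆ = 0
    rw [hφψ, hφψ, hφψ, ← map_add, ← map_add]
    have h := lie_jacobi (φ w) (φ u) (φ v)
    rw [← lie_skew ⁅φ u, φ v⁆ (φ w), ← lie_skew ⁅φ v, φ w⁆ (φ u),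
      ← lie_skew ⁅φ w, φ u⁆ (φ v),
      show -⁅φ w, ⁅φ u, φ v⁆⁆ + -⁅φ u, ⁅φ v, φ w⁆⁆ + -⁅φ v, ⁅φ w, φ u⁆⁆ =
        -(⁅φ w, ⁅φ u, φ v⁆⁆ + ⁅φ u, ⁅φ v, φ w⁆⁆ + ⁅φ v, ⁅φ w, φ u⁆⁆) by abel,
      h, neg_zero, map_zero]
  -- structure constants
  · -- br X0 X1 = 2 X1
    show ψ ⁅φ X0, φ X1⁆ = (2 : ℝ) • X1
    rw [hX0, hX1, hφsingle, hφsingle]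
    have e : ⁅S 0, S 1⁆ = (2 : ℝ) • K1 - (2 : ℝ) • J := by
      rw [hS0, hS1]
      simp only [smul_lie, lie_sub, hK2K1, hK2J]
      module
    rw [e]
    simp only [map_smul, map_add, map_sub, map_neg, map_zero, hψK1, hψJ, hX1, hX2]
    funext k; fin_cases k <;> simp [Pi.single_apply] <;> try ring
  · -- br X0 X2 = -(2 X2)
    show ψ ⁅φ X0, φ X2⁆ = -((2 : ℝ) • X2)
    rw [hX0, hX2, hφsingle, hφsingle]
    have e : ⁅S 0, S 2⁆ = -((2 : ℝ) • K1) - (2 : ℝ) • J := by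
      rw [hS0, hS2]
      simp only [smul_lie, lie_add, hK2K1, hK2J]
      module
    rw [e]
    simp only [map_smul, map_add, map_sub, map_neg, map_zero, hψK1, hψJ, hX1, hX2]
    funext k; fin_cases k <;> simp [Pi.single_apply] <;> try ring
  · -- br X1 X2 = X0
    show ψ ⁅φ X1, φ X2⁆ = X0
    rw [hX1, hX2, hφsingle, hφsingle]
    have e : ⁅S 1, S 2⁆ = -((2 : ℝ) • K2) := by
      rw [hS1, hS2]
      simp only [sub_lie, lie_add, lie_self, hK1J, hJK1]
      module
    rw [e]
    simp only [map_smul, map_add, map_sub, map_neg, map_zero, hψK2, hX0]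
    funext k; fin_cases k <;> simp [Pi.single_apply] <;> try ring
  · -- br x0 x1 = -((η/2) x1)
    show ψ ⁅φ x0, φ x1⁆ = -((η / 2) • x1)
    rw [hx0, hx1, hφsingle, hφsingle]
    have e : ⁅S 3, S 4⁆ = -((η ^ 2 / 4) • K1) - (η / 4) • P0 - (η ^ 2 / 4) • J
        - (η / 4) • P2 := by
      rw [hS3, hS4]
      simp only [smul_lie, lie_smul, lie_add, hP1P0, hP1K1, hP1P2, hP1J]
      module
    rw [e]
    simp only [map_smul, map_add, map_sub, map_neg, map_zero, map_smul,
      hψK1, hψP0, hψJ, hψP2, hX1, hX2, hx1, hx2]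
    funext k; fin_cases k <;> simp [Pi.single_apply] <;> try ring
  · -- br x0 x2 = -((η/2) x2)
    show ψ ⁅φ x0, φ x2⁆ = -((η / 2) • x2)
    rw [hx0, hx2, hφsingle, hφsingle]
    have e : ⁅S 3, S 5⁆ = -((η ^ 2 / 4) • J) - (η / 4) • P2 + (η ^ 2 / 4) • K1
        + (η / 4) • P0 := by
      rw [hS3, hS5]
      simp only [smul_lie, lie_smul, lie_sub, lie_add, hP1P0, hP1K1, hP1P2, hP1J]
      module
    rw [e]
    simp only [map_smul, map_add, map_sub, map_neg, map_zero, map_smul,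
      hψK1, hψP0, hψJ, hψP2, hX1, hX2, hx1, hx2]
    funext k; fin_cases k <;> simp [Pi.single_apply] <;> try ring
  · -- br x1 x2 = 0
    show ψ ⁅φ x1, φ x2⁆ = 0
    rw [hx1, hx2, hφsingle, hφsingle]
    have e : ⁅S 4, S 5⁆ = 0 := by
      rw [hS4, hS5]
      simp only [smul_lie, lie_smul, lie_sub, lie_add, add_lie, lie_self,
        hP0P2, hP0J, hP0K1, hK1P2, hK1J, hK1P0, hP2J, hP2P0, hP2K1, hJP2, hJP0, hJK1,
        hP0P1, hP2P1, lie_zero, zero_lie, smul_zero]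
      module
    rw [e, map_zero]
  · -- br x0 X0 = 0
    show ψ ⁅φ x0, φ X0⁆ = 0
    rw [hx0, hX0, hφsingle, hφsingle]
    have e : ⁅S 3, S 0⁆ = 0 := by
      rw [hS3, hS0]
      simp only [smul_lie, lie_smul, hP1K2, smul_zero]
    rw [e, map_zero]
  · -- br x0 X1 = x2 + (η/2) X1
    show ψ ⁅φ x0, φ X1⁆ = x2 + (η / 2) • X1
    rw [hx0, hX1, hφsingle, hφsingle]
    have e : ⁅S 3, S 1⁆ = -((1 / 2 : ℝ) • P0) + (1 / 2 : ℝ) • P2 := by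
      rw [hS3, hS1]
      simp only [smul_lie, lie_sub, hP1K1, hP1J]
      module
    rw [e]
    simp only [map_smul, map_add, map_sub, map_neg, map_zero, hψP0, hψP2, hX1, hX2, hx1, hx2]
    funext k; fin_cases k <;> simp [Pi.single_apply] <;> try ring
  · -- br x0 X2 = -x1 + (η/2) X2
    show ψ ⁅φ x0, φ X2⁆ = -x1 + (η / 2) • X2
    rw [hx0, hX2, hφsingle, hφsingle]
    have e : ⁅S 3, S 2⁆ = -((1 / 2 : ℝ) • P0) - (1 / 2 : ℝ) • P2 := by
      rw [hS3, hS2]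
      simp only [smul_lie, lie_add, hP1K1, hP1J]
      module
    rw [e]
    simp only [map_smul, map_add, map_sub, map_neg, map_zero, hψP0, hψP2, hX1, hX2, hx1, hx2]
    funext k; fin_cases k <;> simp [Pi.single_apply] <;> try ring
  · -- br x1 X0 = 2 x1
    show ψ ⁅φ x1, φ X0⁆ = (2 : ℝ) • x1
    rw [hx1, hX0, hφsingle, hφsingle]
    have e : ⁅S 4, S 0⁆ = P2 + η • J + P0 + η • K1 := by
      rw [hS4, hS0]
      simp only [smul_lie, lie_smul, add_lie, hP0K2, hK1K2, hP2K2, hJK2]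
      module
    rw [e]
    simp only [map_smul, map_add, map_sub, map_neg, map_zero, hψP2, hψJ, hψP0, hψK1,
      hX1, hX2, hx1, hx2]
    funext k; fin_cases k <;> simp [Pi.single_apply] <;> try ring
  · -- br x1 X1 = -(2 x0) - (η/2) X0
    show ψ ⁅φ x1, φ X1⁆ = -((2 : ℝ) • x0) - (η / 2) • X0
    rw [hx1, hX1, hφsingle, hφsingle]
    have e : ⁅S 4, S 1⁆ = -P1 + η • K2 := by
      rw [hS4, hS1]
      simp only [smul_lie, lie_smul, add_lie, lie_sub, lie_self,
        hP0K1, hK1J, hP2K1, hJK1, hP0J, hP2J, smul_zero, lie_zero, zero_lie]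
      module
    rw [e]
    simp only [map_smul, map_add, map_sub, map_neg, map_zero, hψP1, hψK2, hX0, hx0]
    funext k; fin_cases k <;> simp [Pi.single_apply] <;> try ring
  · -- br x1 X2 = 0
    show ψ ⁅φ x1, φ X2⁆ = 0
    rw [hx1, hX2, hφsingle, hφsingle]
    have e : ⁅S 4, S 2⁆ = 0 := by
      rw [hS4, hS2]
      simp only [smul_lie, lie_smul, add_lie, lie_add, lie_self,
        hP0K1, hK1J, hP2K1, hJK1, hP0J, hP2J, lie_zero, zero_lie, smul_zero]
      module
    rw [e, map_zero]
  · -- br x2 X0 = -(2 x2)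
    show ψ ⁅φ x2, φ X0⁆ = -((2 : ℝ) • x2)
    rw [hx2, hX0, hφsingle, hφsingle]
    have e : ⁅S 5, S 0⁆ = P0 + η • K1 - P2 - η • J := by
      rw [hS5, hS0]
      simp only [smul_lie, lie_smul, sub_lie, add_lie, hP0K2, hK1K2, hP2K2, hJK2]
      module
    rw [e]
    simp only [map_smul, map_add, map_sub, map_neg, map_zero, hψP2, hψJ, hψP0, hψK1,
      hX1, hX2, hx1, hx2]
    funext k; fin_cases k <;> simp [Pi.single_apply] <;> try ring
  · -- br x2 X1 = 0
    show ψ ⁅φ x2, φ X1⁆ = 0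
    rw [hx2, hX1, hφsingle, hφsingle]
    have e : ⁅S 5, S 1⁆ = 0 := by
      rw [hS5, hS1]
      simp only [smul_lie, lie_smul, sub_lie, add_lie, lie_sub, lie_self,
        hP0K1, hK1J, hP2K1, hJK1, hP0J, hP2J, lie_zero, zero_lie, smul_zero]
      module
    rw [e, map_zero]
  · -- br x2 X2 = 2 x0 - (η/2) X0
    show ψ ⁅φ x2, φ X2⁆ = (2 : ℝ) • x0 - (η / 2) • X0
    rw [hx2, hX2, hφsingle, hφsingle]
    have e : ⁅S 5, S 2⁆ = P1 + η • K2 := by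
      rw [hS5, hS2]
      simp only [smul_lie, lie_smul, sub_lie, add_lie, lie_add, lie_self,
        hP0K1, hK1J, hP2K1, hJK1, hP0J, hP2J, lie_zero, zero_lie, smul_zero]
      module
    rw [e]
    simp only [map_smul, map_add, map_sub, map_neg, map_zero, hψP1, hψK2, hX0, hx0]
    funext k; fin_cases k <;> simp [Pi.single_apply] <;> try ring
  -- homomorphism property
  · intro u v
    show ψ ⁅u, v⁆ = ψ ⁅φ (ψ u), φ (ψ v)⁆
    rw [hφψ, hφψ]
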